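/- Fix a prime p. Suppose ∂, ∂* : ℚ_p → ℚ_p are ℚ-derivations (ℚ-linear maps satisfying the Leibniz rule ∂(xy) = x∂y + y∂x) such that neither is a constant multiple of the other, i.e., for every λ ∈ ℚ_p one has λ·∂ ≠ ∂* and λ·∂* ≠ ∂. Then the set {(α, ∂α, ∂*α) : α ∈ ℚ_p} is dense in ℚ_p³ with respect to the product of the p-adic topologies. -/

import Mathlib

open Topology

/-- If `∂, ∂* : ℚ_p → ℚ_p` are `ℚ`-derivations such that neither is a constant
multiple of the other, then `{(α, ∂α, ∂*α) : α ∈ ℚ_p}` is dense in `ℚ_p³` (with the product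
of the `p`-adic topologies). -/
theorem statement5 (p : ℕ) [Fact p.Prime]
    (d ds : Derivation ℚ ℚ_[p] ℚ_[p])
    (h1 : ∀ lam : ℚ_[p], (fun x => lam * d x) ≠ ⇑ds)
    (h2 : ∀ lam : ℚ_[p], (fun x => lam * ds x) ≠ ⇑d) :
    Dense {q : ℚ_[p] × ℚ_[p] × ℚ_[p] | ∃ α : ℚ_[p], q = (α, d α, ds α)} := by
  set S : Set (ℚ_[p] × ℚ_[p] × ℚ_[p]) :=
    {q : ℚ_[p] × ℚ_[p] × ℚ_[p] | ∃ α : ℚ_[p], q = (α, d α, ds α)} with hSdef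
  by_contra hdense
  -- S as an additive submonoid
  let M : AddSubmonoid (ℚ_[p] × ℚ_[p] × ℚ_[p]) :=
    { carrier := S
      zero_mem' := ⟨0, by simp; rfl⟩
      add_mem' := by
        rintro x y ⟨α, rfl⟩ ⟨β, rfl⟩
        exact ⟨α + β, by simp⟩ }
  -- closure of S is closed under rational scalar multiplication
  have hratsmul : ∀ (q : ℚ) (x : ℚ_[p] × ℚ_[p] × ℚ_[p]), x ∈ closure S →
      ((q : ℚ_[p]) • x) ∈ closure S := by
    intro q x hx
    have hcont : Continuous (fun v : ℚ_[p] × ℚ_[p] × ℚ_[p] => (q : ℚ_[p]) • v) :=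
      continuous_const_smul _
    have himg : (fun v : ℚ_[p] × ℚ_[p] × ℚ_[p] => (q : ℚ_[p]) • v) '' S ⊆ S := by
      rintro _ ⟨_, ⟨α, rfl⟩, rfl⟩
      refine ⟨(q : ℚ_[p]) * α, ?_⟩
      have hdq : d ((q : ℚ_[p]) * α) = (q : ℚ_[p]) * d α := by
        have : ((q : ℚ_[p]) * α) = q • α := by rw [Rat.smul_def]
        rw [this, d.map_smul, Rat.smul_def]
      have hdsq : ds ((q : ℚ_[p]) * α) = (q : ℚ_[p]) * ds α := by
        have : ((q : ℚ_[p]) * α) = q • α := by rw [Rat.smul_def]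
        rw [this, ds.map_smul, Rat.smul_def]
      simp [Prod.ext_iff, hdq, hdsq, smul_eq_mul]
    have := mem_closure_image hcont.continuousAt hx
    exact closure_mono himg this
  -- closure of S is closed under all of ℚ_p scalar multiplication, by density of ℚ
  have hsmul : ∀ (c : ℚ_[p]) (x : ℚ_[p] × ℚ_[p] × ℚ_[p]), x ∈ closure S →
      c • x ∈ closure S := by
    intro c x hx
    have hd : DenseRange ((↑) : ℚ → ℚ_[p]) := by
      rw [Metric.denseRange_iff]
      intro x ε hε
      obtain ⟨r, hr⟩ := Padic.rat_dense (p := p) x hε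
      exact ⟨r, by rwa [dist_eq_norm]⟩
    have hcl : IsClosed {r : ℚ_[p] | r • x ∈ closure S} :=
      isClosed_closure.preimage (continuous_id.smul continuous_const)
    have hsub : closure (Set.range ((↑) : ℚ → ℚ_[p])) ⊆ {r : ℚ_[p] | r • x ∈ closure S} :=
      closure_minimal (Set.range_subset_iff.2 fun q => hratsmul q x hx) hcl
    exact hsub (hd c)
  -- the closure of S is a ℚ_p-submodule
  let V : Submodule ℚ_[p] (ℚ_[p] × ℚ_[p] × ℚ_[p]) :=
    { M.topologicalClosure with
      smul_mem' := fun c x hx => hsmul c x hx }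
  have hVmem : ∀ α : ℚ_[p], (α, d α, ds α) ∈ V := fun α =>
    subset_closure (⟨α, rfl⟩ : (α, d α, ds α) ∈ S)
  have hVlt : V < ⊤ := by
    rw [lt_top_iff_ne_top]
    intro hVt
    apply hdense
    have hVS : (V : Set (ℚ_[p] × ℚ_[p] × ℚ_[p])) = closure S := rfl
    have : closure S = Set.univ := by
      rw [← hVS, hVt]; rfl
    show Dense S
    exact dense_iff_closure_eq.2 this
  obtain ⟨f, hf0, hfbot⟩ := Submodule.exists_dual_map_eq_bot_of_lt_top hVlt inferInstance
  have hker : ∀ v ∈ V, f v = 0 := by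
    intro v hv
    have : f v ∈ V.map f := Submodule.mem_map_of_mem hv
    rwa [hfbot, Submodule.mem_bot] at this
  set a := f (1, 0, 0) with ha
  set b := f (0, 1, 0) with hb
  set c := f (0, 0, 1) with hc
  have hrep : ∀ v : ℚ_[p] × ℚ_[p] × ℚ_[p], f v = v.1 * a + v.2.1 * b + v.2.2 * c := by
    intro v
    have hv : v = v.1 • ((1 : ℚ_[p]), (0 : ℚ_[p]), (0 : ℚ_[p]))
        + v.2.1 • ((0 : ℚ_[p]), (1 : ℚ_[p]), (0 : ℚ_[p]))
        + v.2.2 • ((0 : ℚ_[p]), (0 : ℚ_[p]), (1 : ℚ_[p])) := by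
      simp [Prod.ext_iff]
    rw [hv]
    simp only [map_add, map_smul, smul_eq_mul, ha, hb, hc]
    simp
  have hkerα : ∀ α : ℚ_[p], α * a + d α * b + ds α * c = 0 := by
    intro α
    have := hker _ (hVmem α)
    rwa [hrep] at this
  have ha0 : a = 0 := by
    have := hkerα 1
    simpa [Derivation.map_one_eq_zero] using this
  have hkey : ∀ α : ℚ_[p], d α * b + ds α * c = 0 := by
    intro α
    have := hkerα α
    rwa [ha0, mul_zero, zero_add] at this
  by_cases hbz : b = 0
  · by_cases hcz : c = 0
    · exact hf0 (LinearMap.ext fun v => by rw [hrep, ha0, hbz, hcz]; simp)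
    · -- ds = 0, contradicts h1 with lam = 0
      apply h1 0
      funext x
      have := hkey x
      rw [hbz, mul_zero, zero_add, mul_eq_zero] at this
      simp [this.resolve_right hcz]
  · -- d = (-c/b) * ds, contradicts h2
    apply h2 (-c / b)
    funext x
    have := hkey x
    field_simp
    linear_combination -this
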